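/- Let τ_α, τ_β, ρ^c, ρ^k > 0, let c : ℝ → ℝ be differentiable with (a − b)(∇c(a) − ∇c(b)) ≥ ρ^c (a − b)² for all a, b, and let k : ℝ → ℝ satisfy |k(−x) − k(−y)| ≤ ρ^k |x − y| for all x, y. Let ω̄ ∈ ℝ be constant and let (ᾱ, β̄) satisfy 0 = −∇c(ᾱ) + k(−ω̄) and β̄ = ᾱ. Suppose α, β : I → ℝ are differentiable and ω : I → ℝ is a given input with τ_α α̇(t) = −∇c(α(t)) + k(−ω(t)) and τ_β β̇(t) = −β(t) + α(t) on an interval I. Then the storage function Z(t) := (τ_α/ρ^c)(α(t) − ᾱ)² + τ_β (β(t) − β̄)² satisfies, at every t ∈ I, dZ/dt ≤ (ρ^k/ρ^c)² (ω(t) − ω̄)² − (β(t) − β̄)². Hence the second-order generation dynamics with input −ω and output u = β has incremental L₂-gain not greater than ρ^k/ρ^c. -/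

import Mathlib

private lemma aux_ineq (ρc ρk A B W D K : ℝ) (hρc : 0 < ρc)
    (hD1 : ρc * A ^ 2 ≤ A * D) (h3 : A * K ≤ |A| * (ρk * |W|)) :
    (2 / ρc) * A * (-D + K) + 2 * B * (-B + A)
      ≤ (ρk / ρc) ^ 2 * W ^ 2 - B ^ 2 := by
  have hA2 : |A| ^ 2 = A ^ 2 := sq_abs A
  have hW2 : |W| ^ 2 = W ^ 2 := sq_abs W
  have hsq1 : 0 ≤ (ρk / ρc * |W| - |A|) ^ 2 := sq_nonneg _
  have hsq2 : 0 ≤ (A - B) ^ 2 := sq_nonneg _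
  have hexp : (ρk / ρc * |W| - |A|) ^ 2
      = (ρk / ρc) ^ 2 * W ^ 2 - 2 * (ρk / ρc) * (|A| * |W|) + A ^ 2 := by
    rw [sub_sq, mul_pow, sq_abs, sq_abs]; ring
  rw [hexp] at hsq1
  have key : (2 / ρc) * A * (-D + K) ≤ -2 * A ^ 2 + 2 * (ρk / ρc) * (|A| * |W|) := by
    have e : (2 / ρc) * A * (-D + K) = (2 / ρc) * (A * K) - (2 / ρc) * (A * D) := by ring
    rw [e]
    have h0 : (0:ℝ) ≤ 2 / ρc := by positivity
    have t1 : (2 / ρc) * (A * K) ≤ (2 / ρc) * (|A| * (ρk * |W|)) :=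
      mul_le_mul_of_nonneg_left h3 h0
    have t2 : (2 / ρc) * (ρc * A ^ 2) ≤ (2 / ρc) * (A * D) :=
      mul_le_mul_of_nonneg_left hD1 h0
    have t3 : (2 / ρc) * (ρc * A ^ 2) = 2 * A ^ 2 := by field_simp
    have t4 : (2 / ρc) * (|A| * (ρk * |W|)) = 2 * (ρk / ρc) * (|A| * |W|) := by ring
    linarith
  nlinarith [key, hsq1, hsq2]

/-- the second-order generation dynamics
`τ_α α̇ = −∇c(α) + k(−ω)`, `τ_β β̇ = −β + α`, `u = β`, with `c` strongly convex with
parameter `ρᶜ` and `k` Lipschitz with constant `ρᵏ`, admits the storage function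
`Z = (τ_α/ρᶜ)(α − ᾱ)² + τ_β(β − β̄)²` satisfying
`dZ/dt ≤ (ρᵏ/ρᶜ)²(ω − ω̄)² − (β − β̄)²`; hence its incremental L₂-gain is at most
`ρᵏ/ρᶜ`. -/
theorem second_order_generation_incremental_L2_gain
    (τa τb ρc ρk : ℝ) (hτa : 0 < τa) (hτb : 0 < τb) (hρc : 0 < ρc) (hρk : 0 < ρk)
    (c : ℝ → ℝ) (hc : Differentiable ℝ c)
    (hstrong : ∀ a b : ℝ, ρc * (a - b) ^ 2 ≤ (a - b) * (deriv c a - deriv c b))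
    (k : ℝ → ℝ) (hk : ∀ x y : ℝ, |k (-x) - k (-y)| ≤ ρk * |x - y|)
    (ω' α' β' : ℝ) (heq1 : 0 = -(deriv c α') + k (-ω')) (heq2 : β' = α')
    (I : Set ℝ) (α β ω : ℝ → ℝ)
    (hα : ∀ t ∈ I, HasDerivAt α ((-(deriv c (α t)) + k (-(ω t))) / τa) t)
    (hβ : ∀ t ∈ I, HasDerivAt β ((-(β t) + α t) / τb) t) :
    ∀ t ∈ I, ∃ Z' : ℝ,
      HasDerivAt (fun s => (τa / ρc) * (α s - α') ^ 2 + τb * (β s - β') ^ 2) Z' t ∧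
        Z' ≤ (ρk / ρc) ^ 2 * (ω t - ω') ^ 2 - (β t - β') ^ 2 := by
  intro t ht
  refine ⟨(2 / ρc) * (α t - α') * (-(deriv c (α t) - deriv c α') + (k (-(ω t)) - k (-ω')))
      + 2 * (β t - β') * (-(β t - β') + (α t - α')), ?_, ?_⟩
  · have h1 := (((hα t ht).sub_const α').pow 2).const_mul (τa / ρc)
    have h2 := (((hβ t ht).sub_const β').pow 2).const_mul τb
    have := h1.add h2
    convert this using 1
    · rfl
    · rfl
    · rfl
    have hc' : -(deriv c (α t)) + k (-(ω t))
        = -(deriv c (α t) - deriv c α') + (k (-(ω t)) - k (-ω')) := by linarith [heq1]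
    have hab : -(β t) + α t = -(β t - β') + (α t - α') := by rw [heq2]; ring
    rw [hc', hab]
    field_simp
    ring
  · apply aux_ineq _ _ _ _ _ _ _ hρc (hstrong (α t) α')
    calc (α t - α') * (k (-(ω t)) - k (-ω')) ≤ |(α t - α') * (k (-(ω t)) - k (-ω'))| :=
          le_abs_self _
      _ = |α t - α'| * |k (-(ω t)) - k (-ω')| := abs_mul _ _
      _ ≤ |α t - α'| * (ρk * |ω t - ω'|) :=
          mul_le_mul_of_nonneg_left (hk (ω t) ω') (abs_nonneg _)
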